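/- Let G be a finite insoluble group and let x be an element of G not in the soluble radical R(G). If y is an element of G such that the subgroup ⟨x, y⟩ is not soluble, then for every integer i with 0 ≤ i < |x| and gcd(i, |x|) = 1, and every integer j with 0 ≤ j < |x|, the elements x^i·y and y·x^j all lie outside Sol_G(x), and moreover x^i·y ≠ y·x^j for all such i, j. Consequently |G| - |Sol_G(x)| ≥ |x| + φ(|x|), where φ is Euler's totient function. -/

import Mathlib

open Subgroup

/-- The soluble radical of a group: the join of all soluble normal subgroups. -/
def solRadical (G : Type*) [Group G] : Subgroup G :=
  sSup {N : Subgroup G | N.Normal ∧ IsSolvable N}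

instance solRadical_normal {G : Type*} [Group G] : (solRadical G).Normal := by
  constructor
  intro n hn g
  have h : solRadical G ≤ (solRadical G).comap (MulAut.conj g).toMonoidHom := by
    apply sSup_le
    rintro N ⟨hnorm, hsol⟩ x hx
    simp only [Subgroup.mem_comap, MulEquiv.coe_toMonoidHom, MulAut.conj_apply]
    exact le_sSup (s := {N : Subgroup G | N.Normal ∧ IsSolvable N}) ⟨hnorm, hsol⟩
      (hnorm.conj_mem x hx g)
  simpa using h hn

/-- The solubilizer of an element `x`: all `g` such that `⟨x, g⟩` is soluble. -/
def solubilizer {G : Type*} [Group G] (x : G) : Set G :=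
  {g : G | IsSolvable (Subgroup.closure ({x, g} : Set G))}

/-- The solubility graph: vertices are elements outside the soluble radical,
two distinct vertices adjacent iff they generate a soluble subgroup. -/
def solGraph (G : Type*) [Group G] : SimpleGraph {x : G // x ∉ solRadical G} where
  Adj a b := a ≠ b ∧ IsSolvable (Subgroup.closure ({a.1, b.1} : Set G))
  symm := ⟨by rintro a b ⟨hne, hs⟩; exact ⟨hne.symm, by rwa [Set.pair_comm]⟩⟩
  loopless := ⟨by rintro a ⟨h, -⟩; exact h rfl⟩

noncomputable instance {G : Type*} [Group G] [Fintype G] :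
    Fintype {x : G // x ∉ solRadical G} := Fintype.ofFinite _

/-- The degree of `x` in the solubility graph (as the number of its neighbours). -/
noncomputable def solDeg (G : Type*) [Group G] (x : G) : ℕ :=
  {g : G | g ∉ solRadical G ∧ g ≠ x ∧
    IsSolvable (Subgroup.closure ({x, g} : Set G))}.ncard

/-- The number of edges of the solubility graph. -/
noncomputable def solEdges (G : Type*) [Group G] : ℕ :=
  (solGraph G).edgeSet.ncard

/-- The solubility degree of a finite group. -/
noncomputable def Ps (G : Type*) [Group G] : ℚ :=
  (Nat.card {p : G × G // IsSolvable (Subgroup.closure ({p.1, p.2} : Set G))} : ℚ) /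
    (Nat.card G : ℚ) ^ 2


private lemma conj_solvable {G : Type*} [Group G] [Finite G] {x y : G}
    (h : y⁻¹ * x * y ∈ Subgroup.zpowers x) :
    IsSolvable (Subgroup.closure ({x, y} : Set G)) := by
  set N := Subgroup.zpowers x with hN
  set f := (MulAut.conj y⁻¹).toMonoidHom with hf
  have hinj : Function.Injective f := (MulAut.conj y⁻¹).injective
  have hmap : N.map f = N := by
    apply Subgroup.eq_of_le_of_card_ge
    · rw [hN, hf]
      rw [MonoidHom.map_zpowers, Subgroup.zpowers_le]
      simpa [MulAut.conj_apply, mul_assoc] using h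
    · exact le_of_eq (Nat.card_congr (N.equivMapOfInjective f hinj).toEquiv)
  have key : ∀ a : G, a ∈ N ↔ y⁻¹ * a * y ∈ N := by
    intro a
    have h1 : f a ∈ N.map f ↔ a ∈ N :=
      ⟨fun ⟨b, hb, hb2⟩ => hinj hb2 ▸ hb, fun ha => ⟨a, ha, rfl⟩⟩
    have h2 : f a = y⁻¹ * a * y := by simp [hf, MulAut.conj_apply]
    constructor
    · intro ha
      have := h1.mpr ha
      rw [hmap, h2] at this
      exact this
    · intro ha
      refine h1.mp ?_
      rw [hmap, h2]
      exact ha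
  have hy' : y ∈ Subgroup.normalizer (N : Set G) := by
    rw [← inv_mem_iff, Subgroup.mem_normalizer_iff]
    intro a
    simpa [inv_inv] using key a
  set H := Subgroup.closure ({x, y} : Set G) with hH
  have hxH : x ∈ H := Subgroup.subset_closure (Or.inl rfl)
  have hyH : y ∈ H := Subgroup.subset_closure (Or.inr rfl)
  have hNH : N ≤ H := Subgroup.zpowers_le.mpr hxH
  have hle : H ≤ Subgroup.normalizer (N : Set G) := by
    rw [hH]
    apply Subgroup.closure_le _ |>.mpr
    rintro g (hg | hg)
    · rw [hg]; exact Subgroup.le_normalizer (Subgroup.mem_zpowers x)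
    · rw [hg]; exact hy'
  haveI hnorm : (N.subgroupOf H).Normal := by
    rw [Subgroup.normal_subgroupOf_iff hNH]
    intro h k hh hk
    exact (Subgroup.mem_normalizer_iff.mp (hle hk) h).mp hh
  haveI hsolN : Group.IsSolvable (N.subgroupOf H) := by
    apply isSolvable_of_comm
    intro a b
    refine Subtype.ext (Subtype.ext ?_)
    obtain ⟨m, hm⟩ := Subgroup.mem_subgroupOf.mp a.2
    obtain ⟨k, hk⟩ := Subgroup.mem_subgroupOf.mp b.2
    push_cast
    rw [← hm, ← hk, ← zpow_add, ← zpow_add, add_comm]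
  set ybar : H ⧸ N.subgroupOf H := QuotientGroup.mk ⟨y, hyH⟩ with hybar
  haveI hcyc : IsCyclic (H ⧸ N.subgroupOf H) := by
    constructor
    refine ⟨ybar, fun q => ?_⟩
    obtain ⟨g, rfl⟩ := QuotientGroup.mk_surjective q
    have main : ∀ (a : G) (ha : a ∈ H),
        QuotientGroup.mk (⟨a, ha⟩ : H) ∈ Subgroup.zpowers ybar := by
      intro a ha
      induction ha using Subgroup.closure_induction with
      | mem g hg =>
        rcases hg with hg | hg
        · have h1 : (⟨g, Subgroup.subset_closure (by exact Or.inl hg)⟩ : H) ∈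
              N.subgroupOf H := by
            rw [Subgroup.mem_subgroupOf]
            show g ∈ N
            rw [hg]
            exact Subgroup.mem_zpowers x
          rw [(QuotientGroup.eq_one_iff _).mpr h1]
          exact one_mem _
        · have h1 : (⟨g, Subgroup.subset_closure (by exact Or.inr hg)⟩ : H)
              = ⟨y, hyH⟩ := Subtype.ext hg
          rw [h1]
          exact Subgroup.mem_zpowers ybar
      | one =>
        have h1 : ((⟨1, one_mem H⟩ : H)) = 1 := rfl
        rw [h1]
        simpa using one_mem (Subgroup.zpowers ybar)
      | mul a b ha hb iha ihb =>
        have h1 : ((⟨a * b, mul_mem ha hb⟩ : H)) = ⟨a, ha⟩ * ⟨b, hb⟩ := rfl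
        rw [h1, QuotientGroup.mk_mul]
        exact mul_mem iha ihb
      | inv a ha iha =>
        have h1 : ((⟨a⁻¹, inv_mem ha⟩ : H)) = (⟨a, ha⟩)⁻¹ := rfl
        rw [h1, QuotientGroup.mk_inv]
        exact inv_mem iha
    have := main g.1 g.2
    exact Subgroup.mem_zpowers_iff.mp (by simpa using this)
  haveI hsolQ : Group.IsSolvable (H ⧸ N.subgroupOf H) := by
    letI := IsCyclic.commGroup (α := H ⧸ N.subgroupOf H)
    exact isSolvable_of_comm fun a b => mul_comm a b
  exact solvable_of_ker_le_range (N.subgroupOf H).subtype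
    (QuotientGroup.mk' (N.subgroupOf H))
    (by rw [QuotientGroup.ker_mk', Subgroup.range_subtype])


theorem stmt0 {G : Type*} [Group G] [Fintype G] (hG : ¬ IsSolvable G)
    (x : G) (hx : x ∉ solRadical G) (y : G)
    (hy : ¬ IsSolvable (Subgroup.closure ({x, y} : Set G))) :
    (∀ i : ℕ, i < orderOf x → Nat.gcd i (orderOf x) = 1 → x ^ i * y ∉ solubilizer x) ∧
    (∀ j : ℕ, j < orderOf x → y * x ^ j ∉ solubilizer x) ∧
    (∀ i j : ℕ, i < orderOf x → Nat.gcd i (orderOf x) = 1 → j < orderOf x →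
      x ^ i * y ≠ y * x ^ j) ∧
    Nat.card G - (solubilizer x).ncard ≥ orderOf x + Nat.totient (orderOf x) := by
  set n := orderOf x with hn
  have key1 : ∀ i : ℕ, x ^ i * y ∉ solubilizer x := by
    intro i hsol
    apply hy
    haveI : Group.IsSolvable (Subgroup.closure ({x, x ^ i * y} : Set G)) := hsol
    have hle : Subgroup.closure ({x, y} : Set G) ≤
        Subgroup.closure ({x, x ^ i * y} : Set G) := by
      rw [Subgroup.closure_le]
      rintro g (hg | hg) <;> rw [hg]
      · exact Subgroup.subset_closure (Or.inl rfl)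
      · have hxc : x ∈ Subgroup.closure ({x, x ^ i * y} : Set G) :=
          Subgroup.subset_closure (Or.inl rfl)
        have hzc : x ^ i * y ∈ Subgroup.closure ({x, x ^ i * y} : Set G) :=
          Subgroup.subset_closure (Or.inr rfl)
        have h2 := mul_mem (inv_mem (pow_mem hxc i)) hzc
        simpa [inv_mul_cancel_left] using h2
    exact solvable_of_solvable_injective (G' := Subgroup.closure ({x, x ^ i * y} : Set G)) (Subgroup.inclusion_injective hle)
  have key2 : ∀ j : ℕ, y * x ^ j ∉ solubilizer x := by
    intro j hsol
    apply hy
    haveI : Group.IsSolvable (Subgroup.closure ({x, y * x ^ j} : Set G)) := hsol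
    have hle : Subgroup.closure ({x, y} : Set G) ≤
        Subgroup.closure ({x, y * x ^ j} : Set G) := by
      rw [Subgroup.closure_le]
      rintro g (hg | hg) <;> rw [hg]
      · exact Subgroup.subset_closure (Or.inl rfl)
      · have hxc : x ∈ Subgroup.closure ({x, y * x ^ j} : Set G) :=
          Subgroup.subset_closure (Or.inl rfl)
        have hzc : y * x ^ j ∈ Subgroup.closure ({x, y * x ^ j} : Set G) :=
          Subgroup.subset_closure (Or.inr rfl)
        have h2 := mul_mem hzc (inv_mem (pow_mem hxc j))
        simpa [mul_inv_cancel_right] using h2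
    exact solvable_of_solvable_injective (G' := Subgroup.closure ({x, y * x ^ j} : Set G)) (Subgroup.inclusion_injective hle)
  have key3 : ∀ i j : ℕ, Nat.gcd i n = 1 → x ^ i * y ≠ y * x ^ j := by
    intro i j hgcd heq
    apply hy
    apply conj_solvable
    have h1 : y⁻¹ * x ^ (i : ℤ) * y = x ^ (j : ℤ) := by
      rw [zpow_natCast, zpow_natCast, mul_assoc, heq, inv_mul_cancel_left]
    obtain ⟨a, b, hab⟩ := Int.isCoprime_iff_gcd_eq_one.mpr
      (show Int.gcd (i : ℤ) (n : ℤ) = 1 by simpa using hgcd)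
    have hxn : x ^ (n : ℤ) = 1 := by
      rw [zpow_natCast, hn]; exact pow_orderOf_eq_one x
    have hx1 : x = (x ^ (i : ℤ)) ^ a := by
      conv_lhs => rw [← zpow_one x, ← hab]
      rw [zpow_add, mul_comm a, mul_comm b, zpow_mul, zpow_mul, hxn, one_zpow,
        mul_one]
    have h5 : ∀ (c : G) (m : ℤ), (y⁻¹ * c * y) ^ m = y⁻¹ * c ^ m * y := by
      intro c m
      have h6 := map_zpow (MulAut.conj y⁻¹) c m
      simpa [MulAut.conj_apply, inv_inv] using h6.symm
    have h4 : y⁻¹ * x * y = (x ^ (j : ℤ)) ^ a := by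
      conv_lhs => rw [hx1]
      rw [← h5, h1]
    rw [h4, ← zpow_mul]
    exact Subgroup.zpow_mem_zpowers x _
  refine ⟨fun i _ _ => key1 i, fun j _ => key2 j,
    fun i j _ hgcd _ => key3 i j hgcd, ?_⟩
  classical
  set A : Finset G := ((Finset.range n).filter fun i => n.Coprime i).image
    fun i => x ^ i * y with hA
  set B : Finset G := (Finset.range n).image fun j => y * x ^ j with hB
  have hAcard : A.card = Nat.totient n := by
    rw [hA, Finset.card_image_of_injOn]
    · simp [Nat.totient]
    · intro i hi i' hi' he
      simp only [Finset.coe_filter, Set.mem_setOf_eq, Finset.mem_range] at hi hi'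
      exact pow_injOn_Iio_orderOf (Set.mem_Iio.mpr hi.1) (Set.mem_Iio.mpr hi'.1)
        (mul_right_cancel he)
  have hBcard : B.card = n := by
    rw [hB, Finset.card_image_of_injOn, Finset.card_range]
    intro j hj j' hj' he
    simp only [Finset.mem_coe, Finset.mem_range] at hj hj'
    exact pow_injOn_Iio_orderOf (Set.mem_Iio.mpr hj) (Set.mem_Iio.mpr hj')
      (mul_left_cancel he)
  have hdisj : Disjoint A B := by
    rw [Finset.disjoint_left]
    intro a haA haB
    rw [hA, Finset.mem_image] at haA
    rw [hB, Finset.mem_image] at haB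
    obtain ⟨i, hi, rfl⟩ := haA
    obtain ⟨j, hj, hji⟩ := haB
    rw [Finset.mem_filter] at hi
    exact key3 i j (Nat.coprime_comm.mp hi.2) hji.symm
  have hsub : ∀ a ∈ A ∪ B, a ∈ ((solubilizer x)ᶜ : Set G) := by
    intro a ha
    rw [Finset.mem_union] at ha
    rcases ha with ha | ha
    · rw [hA, Finset.mem_image] at ha
      obtain ⟨i, _, rfl⟩ := ha
      exact key1 i
    · rw [hB, Finset.mem_image] at ha
      obtain ⟨j, _, rfl⟩ := ha
      exact key2 j
  have hcomp : (A ∪ B).card ≤ ((solubilizer x)ᶜ : Set G).ncard := by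
    rw [Set.ncard_eq_toFinset_card']
    apply Finset.card_le_card
    intro a ha
    rw [Set.mem_toFinset]
    exact hsub a ha
  have hcard : (A ∪ B).card = Nat.totient n + n := by
    rw [Finset.card_union_of_disjoint hdisj, hAcard, hBcard]
  have hsum := Set.ncard_add_ncard_compl (solubilizer x)
  omega
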